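/- arXiv:1308.3101 — 2 statements merged into one kernel-verified Lean document; each statement's English description precedes it below -/
import Mathlib

section
/- Let f¹, …, fⁿ : ℝ^d → ℝ ∪ {∞} be proper convex l.s.c. functions, each with recession function equal to the indicator of {0} (equivalently, each fⁱ has bounded domain). Then min over ξ ∈ ℝ^d of (min over i of fⁱ(ξ)) equals min over z in the unit simplex Δⁿ and w¹,…,wⁿ ∈ ℝ^d of Σᵢ f̃ⁱ(zⁱ, wⁱ), where f̃ⁱ is the l.s.c. perspective of fⁱ. -/
open scoped BigOperators

/-- Dot product on `Fin d → ℝ`. -/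
noncomputable def dotR {d : ℕ} (a b : Fin d → ℝ) : ℝ := ∑ i, a i * b i

/-- Fenchel convex conjugate of an extended-real-valued function. -/
noncomputable def econj {d : ℕ} (f : (Fin d → ℝ) → EReal) (ν : Fin d → ℝ) : EReal :=
  ⨆ x : Fin d → ℝ, ((dotR ν x : ℝ) : EReal) - f x

/-- The l.s.c. perspective of `f`, defined via the biconjugate. -/
noncomputable def epersp {d : ℕ} (f : (Fin d → ℝ) → EReal) (z : ℝ) (w : Fin d → ℝ) : EReal :=
  ⨆ p : {p : ℝ × (Fin d → ℝ) // ((p.1 : EReal) + econj f p.2 ≤ 0)},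
    ((z * p.1.1 + dotR w p.1.2 : ℝ) : EReal)

/-- Convexity for extended-real-valued functions. -/
def EConvex {d : ℕ} (f : (Fin d → ℝ) → EReal) : Prop :=
  ∀ x y : Fin d → ℝ, ∀ a b : ℝ, 0 ≤ a → 0 ≤ b → a + b = 1 →
    f (a • x + b • y) ≤ (a : EReal) * f x + (b : EReal) * f y

/-- Properness: never `⊥` and not identically `⊤`. -/
def EProper {d : ℕ} (f : (Fin d → ℝ) → EReal) : Prop :=
  (∀ x, f x ≠ ⊥) ∧ ∃ x, f x ≠ ⊤

lemma coe_sum {ι : Type*} (s : Finset ι) (g : ι → ℝ) :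
    ((∑ i ∈ s, g i : ℝ) : EReal) = ∑ i ∈ s, ((g i : ℝ) : EReal) :=
  map_sum (⟨⟨Real.toEReal, EReal.coe_zero⟩, EReal.coe_add⟩ : ℝ →+ EReal) g s

lemma dotR_comm {d : ℕ} (a b : Fin d → ℝ) : dotR a b = dotR b a := by
  simp [dotR, mul_comm]

lemma dotR_zero_left {d : ℕ} (b : Fin d → ℝ) : dotR 0 b = 0 := by
  simp [dotR]

lemma dotR_zero_right {d : ℕ} (a : Fin d → ℝ) : dotR a 0 = 0 := by
  simp [dotR]

/-- Existence of a global minimum for a proper lsc function with bounded domain. -/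
lemma exists_global_min {d : ℕ} (f : (Fin d → ℝ) → EReal) (hproper : EProper f)
    (hlsc : LowerSemicontinuous f) (hbdd : Bornology.IsBounded {x | f x ≠ ⊤}) :
    ∃ c : ℝ, (∀ x, (c : EReal) ≤ f x) ∧ (∃ x, f x = (c : EReal)) := by
  obtain ⟨x₁, hx₁⟩ := hproper.2
  set K := closure {x | f x ≠ ⊤} with hK
  have hKc : IsCompact K := hbdd.isCompact_closure
  have hKcl : IsClosed K := isClosed_closure
  have hx₁K : x₁ ∈ K := subset_closure hx₁
  set A : EReal := ⨅ x : K, f x with hA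
  have hAle : A ≤ f x₁ := iInf_le _ (⟨x₁, hx₁K⟩ : K)
  have hAtop : A ≠ ⊤ := fun h => hx₁ (top_le_iff.1 (h ▸ hAle))
  -- directed family of sublevel sets
  have hne : Nonempty {c : EReal // A < c} := ⟨⟨⊤, lt_top_iff_ne_top.2 hAtop⟩⟩
  set t : {c : EReal // A < c} → Set (Fin d → ℝ) := fun c => K ∩ f ⁻¹' Set.Iic c.1 with ht
  have htn : ∀ c, (t c).Nonempty := by
    rintro ⟨c, hc⟩
    rw [hA, iInf_lt_iff] at hc
    obtain ⟨⟨x, hxK⟩, hx⟩ := hc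
    exact ⟨x, hxK, le_of_lt hx⟩
  have htc : ∀ c, IsCompact (t c) := fun c => hKc.inter_right (hlsc.isClosed_preimage c.1)
  have htcl : ∀ c, IsClosed (t c) := fun c => hKcl.inter (hlsc.isClosed_preimage c.1)
  have htd : Directed (· ⊇ ·) t := by
    rintro ⟨c₁, hc₁⟩ ⟨c₂, hc₂⟩
    refine ⟨⟨min c₁ c₂, lt_min hc₁ hc₂⟩, ?_, ?_⟩ <;>
      exact Set.inter_subset_inter_right _ (Set.preimage_mono (Set.Iic_subset_Iic.2 (by simp)))
  obtain ⟨x₀, hx₀⟩ := IsCompact.nonempty_iInter_of_directed_nonempty_isCompact_isClosed t htd htn htc htcl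
  simp only [Set.mem_iInter] at hx₀
  have hx₀A : f x₀ ≤ A := by
    by_contra h
    push_neg at h
    obtain ⟨c, hc1, hc2⟩ := exists_between h
    exact absurd ((hx₀ ⟨c, hc1⟩).2 : f x₀ ≤ c) (not_le.2 hc2)
  have hmin : ∀ x, f x₀ ≤ f x := by
    intro x
    by_cases hx : f x = ⊤
    · exact hx ▸ le_top
    · exact hx₀A.trans (iInf_le _ (⟨x, subset_closure hx⟩ : K))
  have hnt : f x₀ ≠ ⊤ := fun h => hx₁ (top_le_iff.1 (h ▸ hmin x₁))
  have hnb : f x₀ ≠ ⊥ := hproper.1 x₀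
  lift f x₀ to ℝ using ⟨hnt, hnb⟩ with c hc
  exact ⟨c, fun x => hc ▸ hmin x, x₀, hc.symm⟩

/-- Feasibility of `(c, 0)` when `c` is a global lower bound. -/
lemma feas_of_lb {d : ℕ} (f : (Fin d → ℝ) → EReal) {c : ℝ} (hc : ∀ x, (c : EReal) ≤ f x) :
    ((c : ℝ) : EReal) + econj f 0 ≤ 0 := by
  have h1 : econj f 0 ≤ ((-c : ℝ) : EReal) := by
    refine iSup_le fun x => ?_
    rw [dotR_zero_left]
    have : -(f x) ≤ -((c : ℝ) : EReal) := EReal.neg_le_neg_iff.2 (hc x)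
    calc ((0:ℝ) : EReal) - f x = -(f x) := by
          rw [sub_eq_add_neg]; simp
      _ ≤ -((c : ℝ) : EReal) := this
      _ = ((-c : ℝ) : EReal) := by rw [EReal.coe_neg]
  calc ((c : ℝ) : EReal) + econj f 0 ≤ ((c : ℝ) : EReal) + ((-c : ℝ) : EReal) :=
        add_le_add_right h1 _
    _ = ((c + -c : ℝ) : EReal) := by rw [EReal.coe_add]
    _ = 0 := by norm_num

/-- Lower bound for the perspective: `z * c ≤ epersp f z w` if `c ≤ f`. -/
lemma persp_ge {d : ℕ} (f : (Fin d → ℝ) → EReal) {c : ℝ} (hc : ∀ x, (c : EReal) ≤ f x)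
    (z : ℝ) (w : Fin d → ℝ) : ((z * c : ℝ) : EReal) ≤ epersp f z w := by
  have := le_iSup (fun p : {p : ℝ × (Fin d → ℝ) // ((p.1 : EReal) + econj f p.2 ≤ 0)} =>
    ((z * p.1.1 + dotR w p.1.2 : ℝ) : EReal)) ⟨(c, 0), feas_of_lb f hc⟩
  simpa [epersp, dotR_zero_right] using this

/-- Fenchel inequality step. -/
lemma feas_bound {d : ℕ} (f : (Fin d → ℝ) → EReal) {t : ℝ} {ν : Fin d → ℝ}
    (hp : ((t : ℝ) : EReal) + econj f ν ≤ 0) {ξ : Fin d → ℝ} {r : ℝ} (hr : f ξ = (r : EReal)) :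
    t + dotR ξ ν ≤ r := by
  have h1 : ((dotR ν ξ : ℝ) : EReal) - f ξ ≤ econj f ν :=
    le_iSup (fun x => ((dotR ν x : ℝ) : EReal) - f x) ξ
  rw [hr, ← EReal.coe_sub] at h1
  have h2 : ((t + (dotR ν ξ - r) : ℝ) : EReal) ≤ 0 := by
    rw [EReal.coe_add]
    calc (t : EReal) + ((dotR ν ξ - r : ℝ) : EReal) ≤ (t : EReal) + econj f ν :=
          add_le_add_right h1 _
      _ ≤ 0 := hp
  have h3 : t + (dotR ν ξ - r) ≤ 0 := by exact_mod_cast h2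
  rw [dotR_comm]
  linarith

/-- Upper bound: `epersp f 1 ξ ≤ f ξ`. -/
lemma persp_le_one {d : ℕ} (f : (Fin d → ℝ) → EReal) (hproper : EProper f) (ξ : Fin d → ℝ) :
    epersp f 1 ξ ≤ f ξ := by
  refine iSup_le fun p => ?_
  by_cases hξ : f ξ = ⊤
  · exact hξ ▸ le_top
  · lift f ξ to ℝ using ⟨hξ, hproper.1 ξ⟩ with r hr
    have := feas_bound f p.2 (ξ := ξ) (r := r) hr.symm
    exact_mod_cast (by linarith [this] : 1 * p.1.1 + dotR ξ p.1.2 ≤ r)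

/-- Upper bound: `epersp f 0 0 ≤ 0`. -/
lemma persp_le_zero {d : ℕ} (f : (Fin d → ℝ) → EReal) : epersp f 0 0 ≤ 0 := by
  refine iSup_le fun p => ?_
  simp [dotR_zero_left]

/-- for proper convex l.s.c. functions `f i` with bounded effective
domain, the minimum of the pointwise minimum equals the minimum over the simplex
of the sum of perspectives. -/
theorem min_of_min_eq_min_persp {d n : ℕ} (f : Fin n → (Fin d → ℝ) → EReal)
    (hproper : ∀ i, EProper (f i)) (hconv : ∀ i, EConvex (f i))
    (hlsc : ∀ i, LowerSemicontinuous (f i))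
    (hbdd : ∀ i, Bornology.IsBounded {x | f i x ≠ ⊤}) :
    (⨅ ξ : Fin d → ℝ, ⨅ i, f i ξ)
      = ⨅ z : {z : Fin n → ℝ // z ∈ stdSimplex ℝ (Fin n)},
          ⨅ w : Fin n → (Fin d → ℝ), ∑ i, epersp (f i) (z.1 i) (w i) := by
  choose c hc hcex using fun i => exists_global_min (f i) (hproper i) (hlsc i) (hbdd i)
  choose xm hxm using hcex
  apply le_antisymm
  · -- LHS ≤ RHS
    refine le_iInf fun z => le_iInf fun w => ?_
    rcases Nat.eq_zero_or_pos n with hn | hn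
    · exfalso
      have := z.2.2
      subst hn
      simp at this
    obtain ⟨i₀, -, hi₀⟩ := Finset.exists_min_image Finset.univ c
      ⟨⟨0, hn⟩, Finset.mem_univ _⟩
    have hz1 : ∑ i, z.1 i = 1 := z.2.2
    have hznn : ∀ i, 0 ≤ z.1 i := fun i => z.2.1 i
    have hreal : c i₀ ≤ ∑ i, z.1 i * c i := by
      calc c i₀ = (∑ i, z.1 i) * c i₀ := by rw [hz1, one_mul]
        _ = ∑ i, z.1 i * c i₀ := Finset.sum_mul ..
        _ ≤ ∑ i, z.1 i * c i := by
            refine Finset.sum_le_sum fun i _ => ?_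
            exact mul_le_mul_of_nonneg_left (hi₀ i (Finset.mem_univ i)) (hznn i)
    calc (⨅ ξ : Fin d → ℝ, ⨅ i, f i ξ) ≤ ⨅ i, f i (xm i₀) := iInf_le _ _
      _ ≤ f i₀ (xm i₀) := iInf_le _ _
      _ = ((c i₀ : ℝ) : EReal) := hxm i₀
      _ ≤ ((∑ i, z.1 i * c i : ℝ) : EReal) := by exact_mod_cast hreal
      _ = ∑ i, ((z.1 i * c i : ℝ) : EReal) := coe_sum _ _
      _ ≤ ∑ i, epersp (f i) (z.1 i) (w i) :=
          Finset.sum_le_sum fun i _ => persp_ge (f i) (hc i) (z.1 i) (w i)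
  · -- RHS ≤ LHS
    refine le_iInf fun ξ => le_iInf fun i => ?_
    set zf : Fin n → ℝ := fun j => if j = i then 1 else 0 with hzf
    have hzmem : zf ∈ stdSimplex ℝ (Fin n) := by
      constructor
      · intro j; by_cases h : j = i <;> simp [hzf, h]
      · simp [hzf]
    set wf : Fin n → (Fin d → ℝ) := fun j => if j = i then ξ else 0 with hwf
    calc (⨅ z : {z : Fin n → ℝ // z ∈ stdSimplex ℝ (Fin n)},
            ⨅ w : Fin n → (Fin d → ℝ), ∑ j, epersp (f j) (z.1 j) (w j))
        ≤ ⨅ w : Fin n → (Fin d → ℝ), ∑ j, epersp (f j) (zf j) (w j) :=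
          iInf_le _ (⟨zf, hzmem⟩ : {z : Fin n → ℝ // z ∈ stdSimplex ℝ (Fin n)})
      _ ≤ ∑ j, epersp (f j) (zf j) (wf j) := iInf_le _ wf
      _ ≤ ∑ j, (if j = i then f i ξ else 0) := by
          refine Finset.sum_le_sum fun j _ => ?_
          by_cases h : j = i
          · subst h; simpa [hzf, hwf] using persp_le_one (f j) (hproper j) ξ
          · simpa [hzf, hwf, h] using persp_le_zero (f j)
      _ = f i ξ := by simp
end

section
/- Let ϑ(h) = min_k ( α^k |h| + β^k ) with α^k, β^k ≥ 0 be a concave-type min-of-L¹ potential on h ∈ {−(L−1),…,L−1}, and θ^{ij} = ϑ^{j−i}. For fixed x_s, x_t ∈ Δ^L, the standard per-edge LP value min over x_{st} ∈ M(x_s,x_t) of Σ_{ij} θ^{ij} x_{st}^{ij} equals the minimum of Σ_k ( α^k Σ_i |Y_s^{ki} − Y_t^{ki}| + (β^k/2)(Σ_i y_s^{ki} + Σ_i y_t^{ki}) ) over nonnegative variables y_s^{k}, y_t^{k} ∈ ℝ^L_{≥0} satisfying Σ_k y_s^{ki} = x_s^i, Σ_k y_t^{ki} = x_t^i for all i,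 and Σ_i y_s^{ki} = Σ_i y_t^{ki} for all k, where Y^{ki} denotes cumulative sums of y^{k} within branch k. -/
open scoped BigOperators

/-- Cumulative sums of `x : Fin L → ℝ`, extended to all integer indices:
`cum x i = Σ_{j < i} x j` (so it is `0` for `i ≤ 0` and the total mass for `i ≥ L`). -/
noncomputable def cum {L : ℕ} (x : Fin L → ℝ) (i : ℤ) : ℝ :=
  ∑ j : Fin L, if (j : ℤ) < i then x j else 0

/-- The transportation polytope `M(xs, xt) ⊆ Δ^{L²}`: joint distributions with
marginals `xs` and `xt`. -/
def marg (L : ℕ) (xs xt : Fin L → ℝ) : Set (Fin L → Fin L → ℝ) :=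
  {x | (∀ i j, 0 ≤ x i j) ∧ (∑ i, ∑ j, x i j) = 1 ∧
    (∀ i, xs i = ∑ j, x i j) ∧ (∀ j, xt j = ∑ i, x i j)}

lemma cum_nonpos {L : ℕ} (x : Fin L → ℝ) (i : ℤ) (h : i ≤ 0) : cum x i = 0 := by
  unfold cum
  apply Finset.sum_eq_zero
  intro j _
  rw [if_neg]
  omega
lemma cum_ge {L : ℕ} (x : Fin L → ℝ) (i : ℤ) (h : (L:ℤ) ≤ i) : cum x i = ∑ j, x j := by
  unfold cum
  apply Finset.sum_congr rfl
  intro j _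
  rw [if_pos]
  exact lt_of_lt_of_le (by exact_mod_cast j.2) h
lemma cum_mono {L : ℕ} (x : Fin L → ℝ) (hx : ∀ i, 0 ≤ x i) {a b : ℤ} (h : a ≤ b) :
    cum x a ≤ cum x b := by
  apply Finset.sum_le_sum
  intro j _
  split_ifs with h1 h2
  · exact le_refl _
  · omega
  · exact hx j
  · exact le_refl _
lemma cum_nonneg {L : ℕ} (x : Fin L → ℝ) (hx : ∀ i, 0 ≤ x i) (a : ℤ) : 0 ≤ cum x a := by
  apply Finset.sum_nonneg; intro j _; split_ifs; exacts [hx j, le_refl 0]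
lemma cum_succ {L : ℕ} (x : Fin L → ℝ) (n : Fin L) :
    cum x ((n:ℤ) + 1) = cum x (n:ℤ) + x n := by
  unfold cum
  rw [← Finset.sum_add_sum_compl {n} (fun j => if (j:ℤ) < (n:ℤ)+1 then x j else 0),
      ← Finset.sum_add_sum_compl {n} (fun j => if (j:ℤ) < (n:ℤ) then x j else 0)]
  simp only [Finset.sum_singleton]
  rw [if_pos (by omega), if_neg (by omega)]
  have : ∀ j ∈ ({n}ᶜ : Finset (Fin L)), (if (j:ℤ) < (n:ℤ)+1 then x j else 0) = (if (j:ℤ) < (n:ℤ) then x j else 0) := by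
    intro j hj
    have hjn : j ≠ n := by simpa using hj
    have : (j:ℤ) ≠ (n:ℤ) := fun h => hjn (Fin.ext (by exact_mod_cast h))
    split_ifs <;> first | rfl | omega
  rw [Finset.sum_congr rfl this]
  ring
lemma tsum_cum_eq {L : ℕ} (μ ν : Fin L → ℝ) (hm : ∑ i, μ i = ∑ i, ν i) :
    ∑' t : ℤ, |cum μ t - cum ν t| = ∑ t ∈ Finset.Ioo (0:ℤ) (L:ℤ), |cum μ t - cum ν t| := by
  apply tsum_eq_sum
  intro t ht
  rw [Finset.mem_Ioo] at ht
  push_neg at ht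
  rcases le_or_gt t 0 with h | h
  · rw [cum_nonpos _ _ h, cum_nonpos _ _ h]; simp
  · rw [cum_ge _ _ (ht h), cum_ge _ _ (ht h), hm]; simp
lemma abs_sub_eq_sum {L : ℕ} (i j : Fin L) :
    ((|(j:ℤ) - (i:ℤ)| : ℤ) : ℝ)
      = ∑ t ∈ Finset.Ioo (0:ℤ) (L:ℤ),
          |(if (i:ℤ) < t then (1:ℝ) else 0) - (if (j:ℤ) < t then (1:ℝ) else 0)| := by
  have hi : (i:ℤ) < L := by exact_mod_cast i.2
  have hj : (j:ℤ) < L := by exact_mod_cast j.2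
  have hi0 : (0:ℤ) ≤ i := Int.ofNat_nonneg _
  have hj0 : (0:ℤ) ≤ j := Int.ofNat_nonneg _
  have key : ∀ t : ℤ, |(if (i:ℤ) < t then (1:ℝ) else 0) - (if (j:ℤ) < t then (1:ℝ) else 0)|
      = if t ∈ Finset.Ioc (min (i:ℤ) j) (max (i:ℤ) j) then (1:ℝ) else 0 := by
    intro t
    simp only [Finset.mem_Ioc, lt_min_iff, min_lt_iff, le_max_iff, max_le_iff]
    split_ifs <;> simp_all <;> omega
  rw [Finset.sum_congr rfl (fun t _ => key t), Finset.sum_ite_mem,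
    Finset.sum_const, nsmul_eq_mul, mul_one]
  have hsub : Finset.Ioo (0:ℤ) (L:ℤ) ∩ Finset.Ioc (min (i:ℤ) j) (max (i:ℤ) j)
      = Finset.Ioc (min (i:ℤ) j) (max (i:ℤ) j) := by
    apply Finset.inter_eq_right.mpr
    intro t ht
    simp only [Finset.mem_Ioc, lt_min_iff, max_le_iff] at ht ⊢
    rw [Finset.mem_Ioo]
    omega
  rw [hsub, Int.card_Ioc]
  rcases le_total (i:ℤ) j with h | h
  · rw [min_eq_left h, max_eq_right h, abs_of_nonneg (by omega : (0:ℤ) ≤ (j:ℤ) - i)]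
    have h2 : (((j:ℤ) - i).toNat : ℤ) = (j:ℤ) - i := Int.toNat_of_nonneg (by omega)
    push_cast
    exact_mod_cast h2.symm
  · rw [min_eq_right h, max_eq_left h, abs_of_nonpos (by omega : (j:ℤ) - i ≤ 0)]
    have h2 : (((i:ℤ) - j).toNat : ℤ) = (i:ℤ) - j := Int.toNat_of_nonneg (by omega)
    have h3 : ((((i:ℤ) - j).toNat : ℤ) : ℝ) = (((i:ℤ) - (j:ℤ) : ℤ) : ℝ) := by exact_mod_cast h2
    push_cast at h3 ⊢
    linarith
lemma cum_sub_eq {L : ℕ} (π : Fin L → Fin L → ℝ) (t : ℤ) :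
    cum (fun i => ∑ j : Fin L, π i j) t - cum (fun j => ∑ i : Fin L, π i j) t
      = ∑ i : Fin L, ∑ j : Fin L, ((if (i:ℤ) < t then (1:ℝ) else 0) - (if (j:ℤ) < t then (1:ℝ) else 0)) * π i j := by
  unfold cum
  have h1 : (∑ i : Fin L, if (i:ℤ) < t then (∑ j : Fin L, π i j) else 0)
      = ∑ i : Fin L, ∑ j : Fin L, (if (i:ℤ) < t then (1:ℝ) else 0) * π i j := by
    apply Finset.sum_congr rfl; intro i _
    split_ifs <;> simp
  have h2 : (∑ j : Fin L, if (j:ℤ) < t then (∑ i : Fin L, π i j) else 0)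
      = ∑ i : Fin L, ∑ j : Fin L, (if (j:ℤ) < t then (1:ℝ) else 0) * π i j := by
    rw [Finset.sum_comm]
    apply Finset.sum_congr rfl; intro j _
    split_ifs <;> simp
  rw [h1, h2, ← Finset.sum_sub_distrib]
  apply Finset.sum_congr rfl; intro i _
  rw [← Finset.sum_sub_distrib]
  apply Finset.sum_congr rfl; intro j _
  ring
lemma coupling_lb {L : ℕ} (π : Fin L → Fin L → ℝ) (hπ : ∀ i j, 0 ≤ π i j) :
    ∑ t ∈ Finset.Ioo (0:ℤ) (L:ℤ),
        |cum (fun i => ∑ j : Fin L, π i j) t - cum (fun j => ∑ i : Fin L, π i j) t|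
      ≤ ∑ i : Fin L, ∑ j : Fin L, ((|(j:ℤ) - (i:ℤ)| : ℤ) : ℝ) * π i j := by
  have step : ∀ t ∈ Finset.Ioo (0:ℤ) (L:ℤ),
      |cum (fun i => ∑ j : Fin L, π i j) t - cum (fun j => ∑ i : Fin L, π i j) t|
        ≤ ∑ i : Fin L, ∑ j : Fin L, |(if (i:ℤ) < t then (1:ℝ) else 0) - (if (j:ℤ) < t then (1:ℝ) else 0)| * π i j := by
    intro t _
    rw [cum_sub_eq]
    refine (Finset.abs_sum_le_sum_abs _ _).trans (Finset.sum_le_sum fun i _ => ?_)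
    refine (Finset.abs_sum_le_sum_abs _ _).trans (Finset.sum_le_sum fun j _ => ?_)
    rw [abs_mul, abs_of_nonneg (hπ i j)]
  refine (Finset.sum_le_sum step).trans (le_of_eq ?_)
  rw [Finset.sum_comm]
  apply Finset.sum_congr rfl; intro i _
  rw [Finset.sum_comm]
  apply Finset.sum_congr rfl; intro j _
  rw [abs_sub_eq_sum, Finset.sum_mul]
lemma overlap_eq (c d b b' : ℝ) (hcd : c ≤ d) (hbb : b ≤ b') :
    max 0 (min d b' - max c b) = max c (min d b') - max c (min d b) := by
  simp only [max_def, min_def]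
  split_ifs <;> linarith
lemma overlap_eq' (c d x : ℝ) (hcd : c ≤ d) :
    d - max c (min d x) = max x d - max x c := by
  simp only [max_def, min_def]
  split_ifs <;> linarith
lemma max_sub_self (x y : ℝ) : max y x - y = max 0 (x - y) := by
  simp only [max_def]
  split_ifs <;> linarith
lemma tele (A B : ℕ → ℝ) (hA : Monotone A) (hB : Monotone B) (m τ₁ τ₂ : ℕ) (h : τ₁ ≤ τ₂) :
    ∑ n ∈ Finset.Ico τ₁ τ₂, max 0 (min (A (m+1)) (B (n+1)) - max (A m) (B n))
      = max (A m) (min (A (m+1)) (B τ₂)) - max (A m) (min (A (m+1)) (B τ₁)) := by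
  have key : ∀ n, max 0 (min (A (m+1)) (B (n+1)) - max (A m) (B n))
      = max (A m) (min (A (m+1)) (B (n+1))) - max (A m) (min (A (m+1)) (B n)) :=
    fun n => overlap_eq _ _ _ _ (hA (Nat.le_succ m)) (hB (Nat.le_succ n))
  rw [Finset.sum_congr rfl (fun n _ => key n), Finset.sum_Ico_eq_sub _ h,
    Finset.sum_range_sub (fun n => max (A m) (min (A (m+1)) (B n))),
    Finset.sum_range_sub (fun n => max (A m) (min (A (m+1)) (B n)))]
  ring
lemma coupling_exists {L : ℕ} (μ ν : Fin L → ℝ) (hμ : ∀ i, 0 ≤ μ i) (hν : ∀ i, 0 ≤ ν i)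
    (hm : ∑ i, μ i = ∑ i, ν i) :
    ∃ π : Fin L → Fin L → ℝ, (∀ i j, 0 ≤ π i j) ∧ (∀ i, ∑ j : Fin L, π i j = μ i) ∧
      (∀ j, ∑ i : Fin L, π i j = ν j) ∧
      ∑ i : Fin L, ∑ j : Fin L, ((|(j:ℤ) - (i:ℤ)| : ℤ) : ℝ) * π i j
        = ∑ t ∈ Finset.Ioo (0:ℤ) (L:ℤ), |cum μ t - cum ν t| := by
  classical
  set A : ℕ → ℝ := fun n => cum μ (n:ℤ) with hAdef
  set B : ℕ → ℝ := fun n => cum ν (n:ℤ) with hBdef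
  have hAmono : Monotone A := fun m n h => cum_mono μ hμ (by exact_mod_cast h)
  have hBmono : Monotone B := fun m n h => cum_mono ν hν (by exact_mod_cast h)
  have hA0 : A 0 = 0 := cum_nonpos μ 0 le_rfl
  have hB0 : B 0 = 0 := cum_nonpos ν 0 le_rfl
  have hAL : A L = ∑ i, μ i := cum_ge μ L le_rfl
  have hBL : B L = ∑ i, ν i := cum_ge ν L le_rfl
  have hABL : A L = B L := by rw [hAL, hBL, hm]
  have hAnn : ∀ n, 0 ≤ A n := fun n => cum_nonneg μ hμ _
  have hBnn : ∀ n, 0 ≤ B n := fun n => cum_nonneg ν hν _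
  have hAle : ∀ n, n ≤ L → A n ≤ A L := fun n h => hAmono h
  have hAsucc : ∀ i : Fin L, A ((i:ℕ)+1) = A i + μ i := by
    intro i
    have := cum_succ μ i
    simpa [hAdef, Int.natCast_succ] using this
  have hBsucc : ∀ j : Fin L, B ((j:ℕ)+1) = B j + ν j := by
    intro j
    have := cum_succ ν j
    simpa [hBdef, Int.natCast_succ] using this
  set Pi2 : ℕ → ℕ → ℝ := fun m n => max 0 (min (A (m+1)) (B (n+1)) - max (A m) (B n)) with hPi2def
  have hPi2symm : ∀ m n, Pi2 m n = max 0 (min (B (n+1)) (A (m+1)) - max (B n) (A m)) := by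
    intro m n; rw [hPi2def]; simp only [min_comm, max_comm]
  -- row marginal
  have hrow : ∀ i : Fin L, ∑ n ∈ Finset.range L, Pi2 i n = μ i := by
    intro i
    rw [Finset.range_eq_Ico, tele A B hAmono hBmono _ 0 L (Nat.zero_le L)]
    have h1 : min (A ((i:ℕ)+1)) (B L) = A ((i:ℕ)+1) := by
      apply min_eq_left; rw [← hABL]; exact hAle _ i.2
    have h2 : min (A ((i:ℕ)+1)) (B 0) = 0 := by
      rw [hB0]; exact min_eq_right (hAnn _)
    rw [h1, h2, max_eq_right (hAmono (Nat.le_succ _)), max_eq_left (hAnn _), hAsucc i]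
    ring
  have hcol : ∀ j : Fin L, ∑ m ∈ Finset.range L, Pi2 m j = ν j := by
    intro j
    rw [Finset.sum_congr rfl (fun m _ => hPi2symm m j), Finset.range_eq_Ico,
      tele B A hBmono hAmono _ 0 L (Nat.zero_le L)]
    have h1 : min (B ((j:ℕ)+1)) (A L) = B ((j:ℕ)+1) := by
      apply min_eq_left; rw [hABL]; exact hBmono j.2
    have h2 : min (B ((j:ℕ)+1)) (A 0) = 0 := by
      rw [hA0]; exact min_eq_right (hBnn _)
    rw [h1, h2, max_eq_right (hBmono (Nat.le_succ _)), max_eq_left (hBnn _), hBsucc j]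
    ring
  -- the per-threshold mass identities
  have hS1 : ∀ τ : ℕ, τ ≤ L →
      ∑ m ∈ Finset.range τ, ∑ n ∈ Finset.Ico τ L, Pi2 m n = max 0 (A τ - B τ) := by
    intro τ hτ
    have step : ∀ m ∈ Finset.range τ, ∑ n ∈ Finset.Ico τ L, Pi2 m n
        = max (B τ) (A (m+1)) - max (B τ) (A m) := by
      intro m hm'
      rw [Finset.mem_range] at hm'
      rw [tele A B hAmono hBmono m τ L hτ]
      have h1 : min (A (m+1)) (B L) = A (m+1) := by
        apply min_eq_left; rw [← hABL]; exact hAle _ (by omega)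
      rw [h1, max_eq_right (hAmono (Nat.le_succ m)), overlap_eq' _ _ _ (hAmono (Nat.le_succ m))]
    rw [Finset.sum_congr rfl step, Finset.sum_range_sub (fun m => max (B τ) (A m)), hA0,
      max_eq_left (hBnn τ), max_sub_self]
  have hS2 : ∀ τ : ℕ, τ ≤ L →
      ∑ n ∈ Finset.range τ, ∑ m ∈ Finset.Ico τ L, Pi2 m n = max 0 (B τ - A τ) := by
    intro τ hτ
    have step : ∀ n ∈ Finset.range τ, ∑ m ∈ Finset.Ico τ L, Pi2 m n
        = max (A τ) (B (n+1)) - max (A τ) (B n) := by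
      intro n hn'
      rw [Finset.mem_range] at hn'
      rw [Finset.sum_congr rfl (fun m _ => hPi2symm m n), tele B A hBmono hAmono n τ L hτ]
      have h1 : min (B (n+1)) (A L) = B (n+1) := by
        apply min_eq_left; rw [hABL]; exact hBmono (by omega)
      rw [h1, max_eq_right (hBmono (Nat.le_succ n)), overlap_eq' _ _ _ (hBmono (Nat.le_succ n))]
    rw [Finset.sum_congr rfl step, Finset.sum_range_sub (fun n => max (A τ) (B n)), hB0,
      max_eq_left (hAnn τ), max_sub_self]
  refine ⟨fun i j => Pi2 (i:ℕ) (j:ℕ), fun i j => le_max_left _ _, ?_, ?_, ?_⟩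
  · intro i
    rw [Fin.sum_univ_eq_sum_range (fun n => Pi2 (i:ℕ) n) L]
    exact hrow i
  · intro j
    rw [Fin.sum_univ_eq_sum_range (fun m => Pi2 m (j:ℕ)) L]
    exact hcol j
  -- the cost identity
  have swap1 : ∑ i : Fin L, ∑ j : Fin L, ((|(j:ℤ) - (i:ℤ)| : ℤ) : ℝ) * Pi2 (i:ℕ) (j:ℕ)
      = ∑ t ∈ Finset.Ioo (0:ℤ) (L:ℤ), ∑ i : Fin L, ∑ j : Fin L,
          |(if (i:ℤ) < t then (1:ℝ) else 0) - (if (j:ℤ) < t then (1:ℝ) else 0)| * Pi2 (i:ℕ) (j:ℕ) := by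
    have h1 : ∀ i : Fin L, ∑ j : Fin L, ((|(j:ℤ) - (i:ℤ)| : ℤ) : ℝ) * Pi2 (i:ℕ) (j:ℕ)
        = ∑ t ∈ Finset.Ioo (0:ℤ) (L:ℤ), ∑ j : Fin L,
            |(if (i:ℤ) < t then (1:ℝ) else 0) - (if (j:ℤ) < t then (1:ℝ) else 0)|
              * Pi2 (i:ℕ) (j:ℕ) := by
      intro i
      rw [← Finset.sum_comm]
      apply Finset.sum_congr rfl; intro j _
      rw [abs_sub_eq_sum, Finset.sum_mul]
    rw [Finset.sum_congr rfl (fun i _ => h1 i), Finset.sum_comm]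
  rw [swap1]
  apply Finset.sum_congr rfl
  intro t ht
  rw [Finset.mem_Ioo] at ht
  set τ : ℕ := t.toNat with hτdef
  have htτ : t = (τ:ℤ) := (Int.toNat_of_nonneg ht.1.le).symm
  have hτL : τ ≤ L := by omega
  have hindL : ∀ m : ℕ, ((m:ℤ) < t) = (m < τ) := by
    intro m; rw [htτ]; simp [Int.ofNat_lt]
  have hcast : ∀ i : Fin L, ((i:ℤ) < t) = ((i:ℕ) < τ) := fun i => hindL (i:ℕ)
  have conv : ∑ i : Fin L, ∑ j : Fin L,
        |(if (i:ℤ) < t then (1:ℝ) else 0) - (if (j:ℤ) < t then (1:ℝ) else 0)| * Pi2 (i:ℕ) (j:ℕ)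
      = ∑ m ∈ Finset.range L, ∑ n ∈ Finset.range L,
        |(if m < τ then (1:ℝ) else 0) - (if n < τ then (1:ℝ) else 0)| * Pi2 m n := by
    simp only [hindL]
    rw [Fin.sum_univ_eq_sum_range (fun m => ∑ j : Fin L,
      |(if m < τ then (1:ℝ) else 0) - (if ((j:ℕ) < τ) then (1:ℝ) else 0)| * Pi2 m (j:ℕ))]
    apply Finset.sum_congr rfl; intro m _
    rw [Fin.sum_univ_eq_sum_range (fun n =>
      |(if m < τ then (1:ℝ) else 0) - (if (n < τ) then (1:ℝ) else 0)| * Pi2 m n)]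
  rw [conv]
  have esplit : ∀ m n : ℕ,
      |(if m < τ then (1:ℝ) else 0) - (if n < τ then (1:ℝ) else 0)| * Pi2 m n
        = (if m < τ ∧ ¬ n < τ then Pi2 m n else 0) + (if n < τ ∧ ¬ m < τ then Pi2 m n else 0) := by
    intro m n
    by_cases h1 : m < τ <;> by_cases h2 : n < τ <;> simp [h1, h2]
  simp only [esplit, Finset.sum_add_distrib]
  have filt1 : (Finset.range L).filter (fun m => m < τ) = Finset.range τ := by
    ext m; simp only [Finset.mem_filter, Finset.mem_range]; omega
  have filt2 : (Finset.range L).filter (fun n => ¬ n < τ) = Finset.Ico τ L := by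
    ext n; simp only [Finset.mem_filter, Finset.mem_range, Finset.mem_Ico]; omega
  have D1 : ∑ m ∈ Finset.range L, ∑ n ∈ Finset.range L,
      (if m < τ ∧ ¬ n < τ then Pi2 m n else 0) = max 0 (A τ - B τ) := by
    rw [← hS1 τ hτL]
    rw [show (∑ m ∈ Finset.range L, ∑ n ∈ Finset.range L,
        (if m < τ ∧ ¬ n < τ then Pi2 m n else 0))
      = ∑ m ∈ Finset.range L, (if m < τ then ∑ n ∈ Finset.range L,
          (if ¬ n < τ then Pi2 m n else 0) else 0) from
      Finset.sum_congr rfl (fun m _ => by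
        by_cases h1 : m < τ
        · simp [h1]
        · simp [h1])]
    rw [← Finset.sum_filter, filt1]
    apply Finset.sum_congr rfl; intro m _
    rw [← Finset.sum_filter, filt2]
  have D2 : ∑ m ∈ Finset.range L, ∑ n ∈ Finset.range L,
      (if n < τ ∧ ¬ m < τ then Pi2 m n else 0) = max 0 (B τ - A τ) := by
    rw [← hS2 τ hτL, Finset.sum_comm]
    rw [show (∑ n ∈ Finset.range L, ∑ m ∈ Finset.range L,
        (if n < τ ∧ ¬ m < τ then Pi2 m n else 0))
      = ∑ n ∈ Finset.range L, (if n < τ then ∑ m ∈ Finset.range L,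
          (if ¬ m < τ then Pi2 m n else 0) else 0) from
      Finset.sum_congr rfl (fun n _ => by
        by_cases h1 : n < τ
        · simp [h1]
        · simp [h1])]
    rw [← Finset.sum_filter, filt1]
    apply Finset.sum_congr rfl; intro n _
    rw [← Finset.sum_filter, filt2]
  rw [D1, D2]
  have hA : cum μ t = A τ := by rw [htτ]
  have hB : cum ν t = B τ := by rw [htτ]
  rw [hA, hB]
  rcases le_total (B τ) (A τ) with h | h
  · rw [abs_of_nonneg (by linarith), max_eq_right (by linarith), max_eq_left (by linarith)]
    ring
  · rw [abs_of_nonpos (by linarith), max_eq_left (by linarith), max_eq_right (by linarith)]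
    ring

/-- for a min-of-`L¹` potential `ϑ(h) = min_k (α^k |h| + β^k)`,
the standard per-edge LP value over the transportation polytope equals the
optimal value of the compact reformulation `E_min-L¹` with branch variables. -/
theorem min_L1_compact_reformulation {L K : ℕ} (hL : 0 < L) (hK : 0 < K)
    (α β : Fin K → ℝ) (hα : ∀ k, 0 ≤ α k) (hβ : ∀ k, 0 ≤ β k)
    (xs xt : Fin L → ℝ)
    (hxs : xs ∈ stdSimplex ℝ (Fin L)) (hxt : xt ∈ stdSimplex ℝ (Fin L)) :
    (⨅ x : ↥(marg L xs xt),
        ∑ i : Fin L, ∑ j : Fin L,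
          (⨅ k, (α k * ((|(j : ℤ) - (i : ℤ)| : ℤ) : ℝ) + β k)) * x.1 i j)
      = ⨅ p : {p : (Fin K → Fin L → ℝ) × (Fin K → Fin L → ℝ) //
            (∀ k i, 0 ≤ p.1 k i) ∧ (∀ k i, 0 ≤ p.2 k i) ∧
            (∀ i, ∑ k, p.1 k i = xs i) ∧ (∀ i, ∑ k, p.2 k i = xt i) ∧
            (∀ k, ∑ i, p.1 k i = ∑ i, p.2 k i)},
          ∑ k, (α k * ∑' i : ℤ, |cum (p.1.1 k) i - cum (p.1.2 k) i|
            + β k / 2 * ((∑ i, p.1.1 k i) + ∑ i, p.1.2 k i)) := by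
  classical
  haveI : Nonempty (Fin K) := ⟨⟨0, hK⟩⟩
  set c : Fin L → Fin L → ℝ := fun i j => ((|(j : ℤ) - (i : ℤ)| : ℤ) : ℝ) with hc
  have hc0 : ∀ i j, 0 ≤ c i j := fun i j => by
    simp only [hc]; exact_mod_cast abs_nonneg ((j:ℤ) - (i:ℤ))
  set θ : Fin L → Fin L → ℝ := fun i j => ⨅ k, (α k * c i j + β k) with hθ
  have hθ_le : ∀ i j k, θ i j ≤ α k * c i j + β k := fun i j k =>
    ciInf_le (Finite.bddBelow_range _) k
  have hθ0 : ∀ i j, 0 ≤ θ i j := fun i j =>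
    le_ciInf fun k => add_nonneg (mul_nonneg (hα k) (hc0 i j)) (hβ k)
  obtain ⟨k₀, hk₀⟩ : ∃ k₀ : Fin L → Fin L → Fin K, ∀ i j,
      θ i j = α (k₀ i j) * c i j + β (k₀ i j) := by
    have h : ∀ i j : Fin L, ∃ k, ∀ k', α k * c i j + β k ≤ α k' * c i j + β k' := fun i j =>
      Finite.exists_min _
    choose k₀ hk₀ using h
    exact ⟨k₀, fun i j => le_antisymm (hθ_le i j _) (le_ciInf (hk₀ i j))⟩
  -- nonemptiness
  have hmarg_ne : (fun i j => xs i * xt j) ∈ marg L xs xt := by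
    refine ⟨fun i j => mul_nonneg (hxs.1 i) (hxt.1 j), ?_, fun i => ?_, fun j => ?_⟩
    · simp only [← Finset.mul_sum, ← Finset.sum_mul, hxs.2, hxt.2, one_mul]
    · rw [← Finset.mul_sum, hxt.2, mul_one]
    · rw [← Finset.sum_mul, hxs.2, one_mul]
  haveI hne1 : Nonempty ↥(marg L xs xt) := ⟨⟨_, hmarg_ne⟩⟩
  haveI hne2 : Nonempty {p : (Fin K → Fin L → ℝ) × (Fin K → Fin L → ℝ) //
      (∀ k i, 0 ≤ p.1 k i) ∧ (∀ k i, 0 ≤ p.2 k i) ∧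
      (∀ i, ∑ k, p.1 k i = xs i) ∧ (∀ i, ∑ k, p.2 k i = xt i) ∧
      (∀ k, ∑ i, p.1 k i = ∑ i, p.2 k i)} := by
    refine ⟨⟨(fun k i => xs i / K, fun k i => xt i / K), fun k i => ?_, fun k i => ?_,
      fun i => ?_, fun i => ?_, fun k => ?_⟩⟩
    · exact div_nonneg (hxs.1 i) (Nat.cast_nonneg K)
    · exact div_nonneg (hxt.1 i) (Nat.cast_nonneg K)
    · rw [Finset.sum_const, Finset.card_univ, Fintype.card_fin, nsmul_eq_mul,
        mul_div_cancel₀ _ (by positivity : (K:ℝ) ≠ 0)]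
    · rw [Finset.sum_const, Finset.card_univ, Fintype.card_fin, nsmul_eq_mul,
        mul_div_cancel₀ _ (by positivity : (K:ℝ) ≠ 0)]
    · rw [← Finset.sum_div, ← Finset.sum_div, hxs.2, hxt.2]
  apply le_antisymm
  · -- LHS ≤ RHS : from branch variables build a coupling
    apply le_ciInf
    rintro ⟨⟨ys, yt⟩, h1, h2, h3, h4, h5⟩
    simp only
    choose π hπ0 hπrow hπcol hπcost using
      fun k => coupling_exists (ys k) (yt k) (h1 k) (h2 k) (h5 k)
    set x : Fin L → Fin L → ℝ := fun i j => ∑ k, π k i j with hxdef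
    have hxrow : ∀ i, ∑ j : Fin L, x i j = xs i := by
      intro i
      rw [hxdef]
      simp only
      rw [Finset.sum_comm]
      rw [Finset.sum_congr rfl (fun k _ => hπrow k i)]
      exact h3 i
    have hxcol : ∀ j, ∑ i : Fin L, x i j = xt j := by
      intro j
      rw [hxdef]
      simp only
      rw [Finset.sum_comm]
      rw [Finset.sum_congr rfl (fun k _ => hπcol k j)]
      exact h4 j
    have hx : x ∈ marg L xs xt := by
      refine ⟨fun i j => Finset.sum_nonneg fun k _ => hπ0 k i j, ?_,
        fun i => (hxrow i).symm, fun j => (hxcol j).symm⟩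
      rw [Finset.sum_congr rfl (fun i _ => hxrow i), hxs.2]
    have hbdd : BddBelow (Set.range (fun q : ↥(marg L xs xt) =>
        ∑ i : Fin L, ∑ j : Fin L, θ i j * q.1 i j)) := by
      refine ⟨0, ?_⟩
      rintro v ⟨q, rfl⟩
      exact Finset.sum_nonneg fun i _ => Finset.sum_nonneg fun j _ =>
        mul_nonneg (hθ0 i j) (q.2.1 i j)
    refine le_trans (ciInf_le hbdd ⟨x, hx⟩) ?_
    have swap : ∑ i : Fin L, ∑ j : Fin L, θ i j * x i j
        = ∑ k, ∑ i : Fin L, ∑ j : Fin L, θ i j * π k i j := by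
      simp only [hxdef, Finset.mul_sum]
      rw [show (∑ i : Fin L, ∑ j : Fin L, ∑ k, θ i j * π k i j)
          = ∑ i : Fin L, ∑ k, ∑ j : Fin L, θ i j * π k i j from
        Finset.sum_congr rfl fun i _ => Finset.sum_comm, Finset.sum_comm]
    rw [swap]
    apply Finset.sum_le_sum
    intro k _
    have hstep : ∑ i : Fin L, ∑ j : Fin L, θ i j * π k i j
        ≤ ∑ i : Fin L, ∑ j : Fin L, (α k * c i j + β k) * π k i j :=
      Finset.sum_le_sum fun i _ => Finset.sum_le_sum fun j _ =>
        mul_le_mul_of_nonneg_right (hθ_le i j k) (hπ0 k i j)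
    refine hstep.trans (le_of_eq ?_)
    rw [tsum_cum_eq _ _ (h5 k)]
    have expand : ∑ i : Fin L, ∑ j : Fin L, (α k * c i j + β k) * π k i j
        = α k * (∑ i : Fin L, ∑ j : Fin L, c i j * π k i j)
          + β k * (∑ i : Fin L, ∑ j : Fin L, π k i j) := by
      simp only [add_mul, Finset.sum_add_distrib, Finset.mul_sum, mul_assoc]
    rw [expand, hπcost k]
    have hmass : ∑ i : Fin L, ∑ j : Fin L, π k i j = ∑ i, ys k i :=
      Finset.sum_congr rfl fun i _ => hπrow k i
    rw [hmass]
    have : ∑ i, yt k i = ∑ i, ys k i := (h5 k).symm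
    rw [this]
    ring
  · -- RHS ≤ LHS : decompose a coupling by argmin branch
    apply le_ciInf
    rintro ⟨x, hx0, hxtot, hxrow, hxcol⟩
    simp only
    set π : Fin K → Fin L → Fin L → ℝ := fun k i j => if k₀ i j = k then x i j else 0
      with hπdef
    have hπ0 : ∀ k i j, 0 ≤ π k i j := by
      intro k i j; rw [hπdef]; dsimp only; split_ifs; exacts [hx0 i j, le_rfl]
    have hπsum : ∀ i j, ∑ k, π k i j = x i j := by
      intro i j
      rw [hπdef]
      simp [Finset.sum_ite_eq]
    set ys : Fin K → Fin L → ℝ := fun k i => ∑ j : Fin L, π k i j with hysdef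
    set yt : Fin K → Fin L → ℝ := fun k j => ∑ i : Fin L, π k i j with hytdef
    have hys0 : ∀ k i, 0 ≤ ys k i := fun k i => Finset.sum_nonneg fun j _ => hπ0 k i j
    have hyt0 : ∀ k j, 0 ≤ yt k j := fun k j => Finset.sum_nonneg fun i _ => hπ0 k i j
    have hyssum : ∀ i, ∑ k, ys k i = xs i := by
      intro i
      rw [hysdef]
      simp only
      rw [Finset.sum_comm, Finset.sum_congr rfl (fun j (_ : j ∈ Finset.univ) => hπsum i j)]
      exact (hxrow i).symm
    have hytsum : ∀ j, ∑ k, yt k j = xt j := by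
      intro j
      rw [hytdef]
      simp only
      rw [Finset.sum_comm, Finset.sum_congr rfl (fun i (_ : i ∈ Finset.univ) => hπsum i j)]
      exact (hxcol j).symm
    have hmass : ∀ k, ∑ i, ys k i = ∑ i, yt k i := by
      intro k
      rw [hysdef, hytdef]
      simp only
      exact Finset.sum_comm
    have hbdd : BddBelow (Set.range (fun q : {p : (Fin K → Fin L → ℝ) × (Fin K → Fin L → ℝ) //
        (∀ k i, 0 ≤ p.1 k i) ∧ (∀ k i, 0 ≤ p.2 k i) ∧
        (∀ i, ∑ k, p.1 k i = xs i) ∧ (∀ i, ∑ k, p.2 k i = xt i) ∧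
        (∀ k, ∑ i, p.1 k i = ∑ i, p.2 k i)} =>
        ∑ k, (α k * ∑' i : ℤ, |cum (q.1.1 k) i - cum (q.1.2 k) i|
          + β k / 2 * ((∑ i, q.1.1 k i) + ∑ i, q.1.2 k i)))) := by
      refine ⟨0, ?_⟩
      rintro v ⟨q, rfl⟩
      refine Finset.sum_nonneg fun k _ => add_nonneg
        (mul_nonneg (hα k) (tsum_nonneg fun t => abs_nonneg _))
        (mul_nonneg (div_nonneg (hβ k) (by norm_num)) (add_nonneg ?_ ?_))
      · exact Finset.sum_nonneg fun i _ => q.2.1 k i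
      · exact Finset.sum_nonneg fun i _ => q.2.2.1 k i
    refine le_trans (ciInf_le hbdd ⟨(ys, yt), hys0, hyt0, hyssum, hytsum, hmass⟩) ?_
    simp only
    have key : ∀ k, α k * ∑' t : ℤ, |cum (ys k) t - cum (yt k) t|
        + β k / 2 * ((∑ i, ys k i) + ∑ i, yt k i)
        ≤ ∑ i : Fin L, ∑ j : Fin L, (α k * c i j + β k) * π k i j := by
      intro k
      have hlb := coupling_lb (π k) (hπ0 k)
      rw [tsum_cum_eq _ _ (hmass k)]
      have expand : ∑ i : Fin L, ∑ j : Fin L, (α k * c i j + β k) * π k i j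
          = α k * (∑ i : Fin L, ∑ j : Fin L, c i j * π k i j)
            + β k * (∑ i : Fin L, ∑ j : Fin L, π k i j) := by
        simp only [add_mul, Finset.sum_add_distrib, Finset.mul_sum, mul_assoc]
      rw [expand]
      have h2' : β k / 2 * ((∑ i, ys k i) + ∑ i, yt k i)
          = β k * (∑ i : Fin L, ∑ j : Fin L, π k i j) := by
        rw [← hmass k]
        rw [hysdef]
        ring
      rw [h2']
      have h1' : ∑ t ∈ Finset.Ioo (0:ℤ) (L:ℤ), |cum (ys k) t - cum (yt k) t|
          ≤ ∑ i : Fin L, ∑ j : Fin L, c i j * π k i j := hlb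
      exact add_le_add_left (mul_le_mul_of_nonneg_left h1' (hα k)) _
    refine (Finset.sum_le_sum fun k (_ : k ∈ Finset.univ) => key k).trans (le_of_eq ?_)
    rw [show (∑ k, ∑ i : Fin L, ∑ j : Fin L, (α k * c i j + β k) * π k i j)
        = ∑ i : Fin L, ∑ k, ∑ j : Fin L, (α k * c i j + β k) * π k i j from Finset.sum_comm]
    apply Finset.sum_congr rfl; intro i _
    rw [Finset.sum_comm]
    apply Finset.sum_congr rfl; intro j _
    rw [hπdef]
    simp only [mul_ite, mul_zero, Finset.sum_ite_eq, Finset.mem_univ, if_pos]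
    rw [← hk₀ i j]
end
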